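/- Let d ∈ ℕ with d ≥ 3, let κ ∈ (0,∞), let v₁, ..., v_{2^{d+1}+1} ∈ ℝ^d be equally spaced collinear points (v_{k+1} - v_k = v₂ - v₁ ≠ 0 for all k), let A be the line segment containing them, and let f, g : ℝ^d → ℝ satisfy f(v_k) - f(v_{k-1}) = -(f(v_{k+1}) - f(v_k)) ∈ {-2κ, 2κ} for all k ∈ {2,...,2^{d+1}}, and |f(x) - g(x)| < κ for all x ∈ A. Then any cover of A by convex subsets B₁, ..., B_N ⊆ A such that g restricted to each B_j is affine must satisfy N ≥ 2^d. -/
import Mathlib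


theorem stmt12 (d : ℕ) (hd : 3 ≤ d) (κ : ℝ) (hκ : 0 < κ)
    (v : ℕ → (Fin d → ℝ)) (hne : v 2 - v 1 ≠ 0)
    (hstep : ∀ k : ℕ, 1 ≤ k → k ≤ 2 ^ (d + 1) → v (k + 1) - v k = v 2 - v 1)
    (f g : (Fin d → ℝ) → ℝ)
    (halt : ∀ k : ℕ, 2 ≤ k → k ≤ 2 ^ (d + 1) →
      f (v k) - f (v (k - 1)) = -(f (v (k + 1)) - f (v k)) ∧
      (f (v k) - f (v (k - 1)) = -(2 * κ) ∨ f (v k) - f (v (k - 1)) = 2 * κ))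
    (happrox : ∀ x ∈ segment ℝ (v 1) (v (2 ^ (d + 1) + 1)), |f x - g x| < κ)
    (N : ℕ) (B : Fin N → Set (Fin d → ℝ))
    (hBsub : ∀ j, B j ⊆ segment ℝ (v 1) (v (2 ^ (d + 1) + 1)))
    (hBconv : ∀ j, Convex ℝ (B j))
    (hcover : segment ℝ (v 1) (v (2 ^ (d + 1) + 1)) ⊆ ⋃ j, B j)
    (hBaff : ∀ j, ∃ (c : ℝ) (w : Fin d → ℝ), ∀ x ∈ B j, g x = c + ∑ i, w i * x i) :
    2 ^ d ≤ N := by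
  set M : ℕ := 2 ^ (d + 1) + 1 with hM
  -- arithmetic progression formula
  have hv : ∀ k, 1 ≤ k → k ≤ M → v k = v 1 + ((k : ℝ) - 1) • (v 2 - v 1) := by
    intro k hk
    induction k, hk using Nat.le_induction with
    | base => intro _; simp
    | succ n hn ih =>
      intro hle
      have h1 : v (n + 1) = v n + (v 2 - v 1) :=
        eq_add_of_sub_eq' (hstep n hn (by omega))
      rw [h1, ih (by omega)]
      push_cast
      module
  -- points lie on segments of other points
  have hseg : ∀ a k b : ℕ, 1 ≤ a → a ≤ k → k ≤ b → b ≤ M →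
      v k ∈ segment ℝ (v a) (v b) := by
    intro a k b ha hak hkb hbM
    rcases eq_or_lt_of_le (hak.trans hkb) with heq | hab
    · have hk : k = a := le_antisymm (heq ▸ hkb) hak
      rw [hk]
      exact left_mem_segment ℝ _ _
    · have hba : (0 : ℝ) < (b : ℝ) - (a : ℝ) := by
        have : (a : ℝ) < (b : ℝ) := by exact_mod_cast hab
        linarith
      set t : ℝ := ((k : ℝ) - a) / ((b : ℝ) - a) with ht
      have hka : (0 : ℝ) ≤ (k : ℝ) - a := by
        have : (a : ℝ) ≤ (k : ℝ) := by exact_mod_cast hak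
        linarith
      have ht0 : 0 ≤ t := div_nonneg hka hba.le
      have ht1 : t ≤ 1 := by
        rw [ht, div_le_one hba]
        have : (k : ℝ) ≤ (b : ℝ) := by exact_mod_cast hkb
        linarith
      rw [segment_eq_image']
      refine ⟨t, ⟨ht0, ht1⟩, ?_⟩
      dsimp only
      rw [hv a ha (by omega), hv b (by omega) hbM, hv k (by omega) (by omega)]
      have hd1 : (v 1 + ((b : ℝ) - 1) • (v 2 - v 1)) - (v 1 + ((a : ℝ) - 1) • (v 2 - v 1))
          = ((b : ℝ) - (a : ℝ)) • (v 2 - v 1) := by module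
      rw [hd1, smul_smul, ht, div_mul_cancel₀ _ hba.ne']
      module
  -- no piece contains three consecutive points
  have key : ∀ k : ℕ, 2 ≤ k → k ≤ 2 ^ (d + 1) → ∀ j,
      v (k - 1) ∈ B j → v k ∈ B j → v (k + 1) ∈ B j → False := by
    intro k hk2 hk3 j h1 h2 h3
    obtain ⟨m, rfl⟩ : ∃ m, k = m + 2 := ⟨k - 2, by omega⟩
    have e1 : m + 2 - 1 = m + 1 := rfl
    rw [e1] at h1
    obtain ⟨c, w, hw⟩ := hBaff j
    have hmid : v (m + 1) + v (m + 3) = (2 : ℝ) • v (m + 2) := by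
      rw [hv (m + 1) (by omega) (by omega), hv (m + 2) (by omega) (by omega),
        hv (m + 3) (by omega) (by omega)]
      push_cast
      module
    have hpt : ∀ i, v (m + 1) i + v (m + 3) i = 2 * v (m + 2) i := by
      intro i
      have := congrFun hmid i
      simpa using this
    have gmid : g (v (m + 1)) + g (v (m + 3)) = 2 * g (v (m + 2)) := by
      rw [hw _ h1, hw _ h3, hw _ h2]
      have hsum : ∑ i, w i * v (m + 1) i + ∑ i, w i * v (m + 3) i
          = 2 * ∑ i, w i * v (m + 2) i := by
        rw [← Finset.sum_add_distrib, Finset.mul_sum]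
        refine Finset.sum_congr rfl fun i _ => ?_
        linear_combination w i * hpt i
      linarith [hsum]
    obtain ⟨hopp, hpm⟩ := halt (m + 2) (by omega) (by omega)
    rw [e1] at hopp hpm
    have a1 := happrox (v (m + 1)) (hBsub j h1)
    have a2 := happrox (v (m + 2)) (hBsub j h2)
    have a3 := happrox (v (m + 3)) (hBsub j h3)
    rw [abs_lt] at a1 a2 a3
    rcases hpm with h | h
    · linarith [a1.1, a1.2, a2.1, a2.2, a3.1, a3.2]
    · linarith [a1.1, a1.2, a2.1, a2.2, a3.1, a3.2]
  -- N is positive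
  have hNpos : 0 < N := by
    rcases Nat.eq_zero_or_pos N with h0 | h
    · exfalso
      have h1A : v 1 ∈ segment ℝ (v 1) (v M) := left_mem_segment ℝ _ _
      have := hcover h1A
      simp only [Set.mem_iUnion] at this
      obtain ⟨j, _⟩ := this
      subst h0
      exact j.elim0
    · exact h
  haveI : Nonempty (Fin N) := ⟨⟨0, hNpos⟩⟩
  have hex : ∀ k ∈ Finset.Icc 1 M, ∃ j, v k ∈ B j := by
    intro k hk
    simp only [Finset.mem_Icc] at hk
    have := hcover (hseg 1 k M le_rfl hk.1 hk.2 le_rfl)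
    simpa [Set.mem_iUnion] using this
  classical
  set jf : ℕ → Fin N := fun k =>
    if h : ∃ j, v k ∈ B j then h.choose else Classical.arbitrary _ with hjfdef
  have hjf : ∀ k ∈ Finset.Icc 1 M, v k ∈ B (jf k) := by
    intro k hk
    have h := hex k hk
    simp only [hjfdef, dif_pos h]
    exact h.choose_spec
  have hcard : (Finset.Icc 1 M).card ≤ 2 * N := by
    have hmain := Finset.card_le_mul_card_image_of_maps_to
      (f := jf) (s := Finset.Icc 1 M) (t := (Finset.univ : Finset (Fin N)))
      (fun a _ => Finset.mem_univ _) 2 ?_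
    · simpa using hmain
    · intro j _
      by_contra hgt
      push_neg at hgt
      rw [Finset.two_lt_card_iff] at hgt
      obtain ⟨a, b, c, ha, hb, hc, hab, hac, hbc⟩ := hgt
      obtain ⟨x, y, z, hx, hy, hz, hxy, hyz⟩ :
          ∃ x y z, x ∈ (Finset.Icc 1 M).filter (fun k => jf k = j) ∧
            y ∈ (Finset.Icc 1 M).filter (fun k => jf k = j) ∧
            z ∈ (Finset.Icc 1 M).filter (fun k => jf k = j) ∧
            x < y ∧ y < z := by
        rcases hab.lt_or_gt with h1 | h1 <;> rcases hac.lt_or_gt with h2 | h2 <;>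
          rcases hbc.lt_or_gt with h3 | h3
        · exact ⟨a, b, c, ha, hb, hc, h1, h3⟩
        · exact ⟨a, c, b, ha, hc, hb, h2, h3⟩
        · omega
        · exact ⟨c, a, b, hc, ha, hb, h2, h1⟩
        · exact ⟨b, a, c, hb, ha, hc, h1, h2⟩
        · omega
        · exact ⟨b, c, a, hb, hc, ha, h3, h2⟩
        · exact ⟨c, b, a, hc, hb, ha, h3, h1⟩
      rw [Finset.mem_filter] at hx hy hz
      have hxI := Finset.mem_Icc.mp hx.1
      have hzI := Finset.mem_Icc.mp hz.1
      have hvx : v x ∈ B j := hx.2 ▸ hjf x hx.1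
      have hvz : v z ∈ B j := hz.2 ▸ hjf z hz.1
      have hc3 : ∀ n, x ≤ n → n ≤ z → v n ∈ B j := fun n hn1 hn2 =>
        (hBconv j).segment_subset hvx hvz (hseg x n z hxI.1 hn1 hn2 hzI.2)
      exact key y (by omega) (by omega) j
        (hc3 (y - 1) (by omega) (by omega))
        (hc3 y (by omega) (by omega))
        (hc3 (y + 1) (by omega) (by omega))
  rw [Nat.card_Icc] at hcard
  have hp : 2 ^ (d + 1) = 2 ^ d * 2 := pow_succ 2 d
  omega
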